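/- For every natural number q ≥ 0, the intersection matrix of the star-shaped weighted tree Λ_{0,q,0} — which has a central vertex of weight −2 and three legs attached to it: a leg consisting of a single vertex of weight −2; a leg consisting of a single vertex of weight −3; and a chain of q vertices of weight −2 followed by a terminal vertex of weight −(q+6) — is negative definite. -/

import Mathlib

/-- The vertex type of a star-shaped tree with `m` legs, leg `i` consisting of a path of
`n i` vertices.  `none` is the central vertex; `some ⟨i, j⟩` is the `j`-th vertex of the
`i`-th leg (the vertex `j = 0` being the one joined to the central vertex by an edge). -/
abbrev StarVertex (m : ℕ) (n : Fin m → ℕ) : Type := Option ((i : Fin m) × Fin (n i))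

/-- The intersection matrix of the star-shaped weighted tree with `m` legs, where the central
vertex has weight `w0` and the `j`-th vertex of the `i`-th leg has weight `w i j`:  diagonal
entries are the weights, off-diagonal entries are `1` for vertices joined by an edge
(consecutive vertices of a leg, or the central vertex and the initial vertex of a leg)
and `0` otherwise. -/
def starMatrix (m : ℕ) (n : Fin m → ℕ) (w0 : ℤ) (w : Fin m → ℕ → ℤ) :
    Matrix (StarVertex m n) (StarVertex m n) ℤ :=
  Matrix.of fun v v' =>
    match v, v' with
    | none, none => w0
    | none, some ⟨_, j⟩ => if (j : ℕ) = 0 then 1 else 0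
    | some ⟨_, j⟩, none => if (j : ℕ) = 0 then 1 else 0
    | some ⟨i, j⟩, some ⟨i', j'⟩ =>
        if (i : ℕ) = (i' : ℕ) then
          if (j : ℕ) = (j' : ℕ) then w i (j : ℕ)
          else if (j : ℕ) + 1 = (j' : ℕ) ∨ (j' : ℕ) + 1 = (j : ℕ) then 1 else 0
        else 0

/-- The weights along a leg consisting of a chain of `k` vertices of weight `-2` followed by a
terminal vertex of weight `-a` (a path of `k + 1` vertices). -/
def chainW (k : ℕ) (a : ℤ) (j : ℕ) : ℤ := if j < k then -2 else -a


set_option maxHeartbeats 1000000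

private lemma step_id (A B C u v : ℝ) (hB : B ≠ 0) (hC : C ≠ 0) (h : A + C = 2*B) :
    A/B*u^2 + B/C*(v - C/B*u)^2 = B/C*v^2 + 2*u^2 - 2*u*v := by
  have hA : A = 2*B - C := by linarith
  subst hA
  field_simp
  ring

private lemma key_lemma (g z : ℕ → ℝ) (hg : ∀ j, g j ≠ 0)
    (hlin : ∀ j, g j + g (j+2) = 2 * g (j+1)) :
    ∀ n : ℕ, ∑ j ∈ Finset.range (n+1), g j / g (j+1) * (z (j+1) - g (j+1) / g j * z j)^2
    = g n / g (n+1) * z (n+1)^2 + g 1 / g 0 * z 0 ^ 2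
      + (∑ j ∈ Finset.range n, 2 * z (j+1)^2)
      - 2 * ∑ j ∈ Finset.range (n+1), z j * z (j+1) := by
  intro n
  induction n with
  | zero =>
    simp only [zero_add, Finset.sum_range_one, Finset.sum_range_zero]
    have h0 := hg 0
    have h1 := hg 1
    field_simp
    ring
  | succ n ih =>
    rw [Finset.sum_range_succ, ih, Finset.sum_range_succ (fun j => 2 * z (j+1)^2),
      Finset.sum_range_succ (fun j => z j * z (j+1)) (n+1),
      Finset.sum_range_succ (fun j => z j * z (j+1)) n]
    simp only [show n+1+1 = n+2 from rfl]
    have h := step_id (g n) (g (n+1)) (g (n+2)) (z (n+1)) (z (n+2)) (hg (n+1)) (hg (n+2)) (hlin n)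
    linarith [h]

private def ent (w : ℕ → ℝ) (j j' : ℕ) : ℝ :=
  if j = j' then w j else if j + 1 = j' ∨ j' + 1 = j then (1:ℝ) else 0

private lemma ent_eq (w : ℕ → ℝ) (j j' : ℕ) (h1 : ¬ j = j')
    (h2 : ¬ (j + 1 = j' ∨ j' + 1 = j)) : ent w j j' = 0 := by
  rw [ent, if_neg h1, if_neg h2]

private lemma ent_adj (w : ℕ → ℝ) (j j' : ℕ) (h1 : ¬ j = j')
    (h2 : j + 1 = j' ∨ j' + 1 = j) : ent w j j' = 1 := by
  rw [ent, if_neg h1, if_pos h2]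

private lemma tridiag (w y : ℕ → ℝ) :
    ∀ n : ℕ, ∑ j ∈ Finset.range (n+1), ∑ j' ∈ Finset.range (n+1), ent w j j' * y j * y j'
    = (∑ j ∈ Finset.range (n+1), w j * y j ^ 2) + 2 * ∑ j ∈ Finset.range n, y j * y (j+1) := by
  intro n
  induction n with
  | zero => simp [ent, sq]; ring
  | succ n ih =>
    rw [Finset.sum_range_succ]
    have h1 : ∀ j ∈ Finset.range (n+1),
        ∑ j' ∈ Finset.range (n+2), ent w j j' * y j * y j'
        = (∑ j' ∈ Finset.range (n+1), ent w j j' * y j * y j')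
          + (if j = n then y n * y (n+1) else 0) := by
      intro j hj
      rw [Finset.sum_range_succ]
      congr 1
      simp only [Finset.mem_range] at hj
      by_cases h : j = n
      · rw [h, if_pos rfl, ent_adj w n (n+1) (by omega) (by omega)]
        ring
      · rw [if_neg h, ent_eq w j (n+1) (by omega) (by omega)]
        ring
    rw [Finset.sum_congr rfl h1, Finset.sum_add_distrib, ih]
    have h2 : ∑ j ∈ Finset.range (n+1), (if j = n then y n * y (n+1) else 0)
        = y n * y (n+1) := by
      rw [Finset.sum_ite_eq' (Finset.range (n+1)) n (fun _ => y n * y (n+1))]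
      simp
    have h3 : ∑ j' ∈ Finset.range (n+2), ent w (n+1) j' * y (n+1) * y j'
        = w (n+1) * y (n+1)^2 + y (n+1) * y n := by
      rw [Finset.sum_range_succ]
      have h4 : ∀ j' ∈ Finset.range (n+1),
          ent w (n+1) j' * y (n+1) * y j' = if j' = n then y (n+1) * y n else 0 := by
        intro j' hj'
        simp only [Finset.mem_range] at hj'
        by_cases h : j' = n
        · rw [h, if_pos rfl, ent_adj w (n+1) n (by omega) (by omega)]
          ring
        · rw [if_neg h, ent_eq w (n+1) j' (by omega) (by omega)]
          ring
      rw [Finset.sum_congr rfl h4,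
        Finset.sum_ite_eq' (Finset.range (n+1)) n (fun _ => y (n+1) * y n)]
      have he : ent w (n+1) (n+1) = w (n+1) := by rw [ent, if_pos rfl]
      rw [he]
      simp
      ring
    rw [h2, h3, Finset.sum_range_succ (fun j => w j * y j ^ 2) (n+1),
      Finset.sum_range_succ (fun j => y j * y (j+1)) n]
    ring

/-- The intersection matrix of the star-shaped weighted tree `Λ_{0,q,0}` (central vertex of
weight `-2`; legs: a single vertex of weight `-2`; a single vertex of weight `-3`; and `q`
vertices of weight `-2` followed by a terminal vertex of weight `-(q+6)`) is negative
definite. -/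
theorem Lambda_0q0_negative_definite (q : ℕ) :
    ∀ x : StarVertex 3 ![1, 1, q + 1] → ℝ, x ≠ 0 →
      ∑ v, ∑ v', ((starMatrix 3 ![1, 1, q + 1] (-2)
          ![fun _ => -2,
            fun _ => -3,
            chainW q ((q : ℤ) + 6)] v v' : ℤ) : ℝ)
          * x v * x v' < 0 := by
  intro x hx
  -- abbreviations
  set c : ℝ := x none with hc
  set a : ℝ := x (some ⟨0, ⟨0, by norm_num⟩⟩) with ha
  set b : ℝ := x (some ⟨1, ⟨0, by norm_num⟩⟩) with hb
  set Y : ℕ → ℝ := fun m => if h : m < q + 1 then x (some ⟨2, ⟨m, h⟩⟩) else 0 with hYdef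
  have hYj : ∀ j : Fin (q+1), x (some ⟨2, j⟩) = Y (j : ℕ) := by
    intro j
    simp only [hYdef, j.isLt, dif_pos, Fin.eta]
    rfl
  set W : ℕ → ℝ := fun m => if m < q then -2 else -((q:ℝ) + 6) with hWdef
  set Z : ℕ → ℝ := fun m => match m with | 0 => c | (m+1) => Y m with hZdef
  set g : ℕ → ℝ := fun j => ((q:ℝ)+1)*((q:ℝ)+5) + 1 - (j:ℝ)*((q:ℝ)+5) with hgdef
  have hgpos : ∀ j, j ≤ q + 1 → 0 < g j := by
    intro j hj
    have hj' : (j:ℝ) ≤ (q:ℝ) + 1 := by exact_mod_cast hj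
    simp only [hgdef]
    nlinarith [Nat.cast_nonneg (α := ℝ) q]
  have hgne : ∀ j, g j ≠ 0 := by
    intro j
    rcases le_or_gt j (q+1) with h | h
    · exact ne_of_gt (hgpos j h)
    · have hj' : (q:ℝ) + 2 ≤ (j:ℝ) := by exact_mod_cast h
      have : g j < 0 := by
        simp only [hgdef]
        nlinarith [Nat.cast_nonneg (α := ℝ) q]
      exact ne_of_lt this
  have hlin : ∀ j, g j + g (j+2) = 2 * g (j+1) := by
    intro j
    simp only [hgdef]
    push_cast
    ring
  have hkey := key_lemma g Z hgne hlin q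
  -- the main simplification of the quadratic form
  simp only [Fintype.sum_option, ← Finset.univ_sigma_univ, Finset.sum_sigma, Fin.sum_univ_three,
    Fin.sum_univ_one, starMatrix, Matrix.of_apply, Matrix.cons_val_zero, Matrix.cons_val_one,
    Matrix.head_cons, Matrix.cons_val_two, Matrix.tail_cons, chainW, Fin.isValue, Fin.val_zero,
    Fin.val_one, Fin.val_two, if_true, Int.cast_neg, Int.cast_ofNat, Int.cast_one, Int.cast_zero]
  norm_num
  have e0 : ∀ f : Fin 1 → ℝ,
      @Finset.sum (Fin 1) ℝ _ (@Finset.univ (Fin 1) (Fin.fintype (![1, 1, q + 1] 0))) f = f 0 :=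
    fun f => Fin.sum_univ_one f
  have e1 : ∀ f : Fin 1 → ℝ,
      @Finset.sum (Fin 1) ℝ _ (@Finset.univ (Fin 1) (Fin.fintype (![1, 1, q + 1] 1))) f = f 0 :=
    fun f => Fin.sum_univ_one f
  simp only [e0, e1]
  change -(2 * c * c) +
        (c * a + c * b +
          ∑ x_1 : Fin (q + 1),
            if (x_1 : ℕ) = 0 then c * x (some ⟨2, x_1⟩) else 0) +
      (a * c + -(2 * a * a) +
          (b * c + -(3 * b * b)) +
        ∑ x_1 : Fin (q + 1),
          ((if (x_1 : ℕ) = 0 then x (some ⟨2, x_1⟩) * c else 0) +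
            ∑ x_2 : Fin (q + 1),
              if (x_1 : ℕ) = (x_2 : ℕ) then
                if (x_1 : ℕ) < q then -(2 * x (some ⟨2, x_1⟩) * x (some ⟨2, x_2⟩))
                else (-6 + -(q : ℝ)) * x (some ⟨2, x_1⟩) * x (some ⟨2, x_2⟩)
              else if (x_1 : ℕ) + 1 = (x_2 : ℕ) ∨ (x_2 : ℕ) + 1 = (x_1 : ℕ) then
                x (some ⟨2, x_1⟩) * x (some ⟨2, x_2⟩) else 0)) <
    0
  -- convert the three Fin sums
  have hS1 : (∑ x_1 : Fin (q + 1), if (x_1 : ℕ) = 0 then c * x (some ⟨2, x_1⟩) else 0)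
      = c * Y 0 := by
    calc (∑ x_1 : Fin (q + 1), if (x_1 : ℕ) = 0 then c * x (some ⟨2, x_1⟩) else 0)
        = ∑ x_1 : Fin (q + 1),
            (fun m : ℕ => if m = 0 then c * Y m else 0) (x_1 : ℕ) := by
          refine Finset.sum_congr rfl fun j _ => ?_
          simp only [hYj j]
      _ = ∑ m ∈ Finset.range (q+1), (if m = 0 then c * Y m else 0) := by
          exact Fin.sum_univ_eq_sum_range (fun m : ℕ => if m = 0 then c * Y m else 0) (q+1)
      _ = c * Y 0 := by
          rw [Finset.sum_ite_eq' (Finset.range (q+1)) 0 (fun m => c * Y m)]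
          simp
  have hS2 : ∀ x_1 : Fin (q + 1),
      (if (x_1 : ℕ) = 0 then x (some ⟨2, x_1⟩) * c else 0)
      = (fun m : ℕ => if m = 0 then Y m * c else 0) (x_1 : ℕ) := by
    intro j
    simp only [hYj j]
  have hS3 : ∀ x_1 : Fin (q + 1),
      (∑ x_2 : Fin (q + 1),
        if (x_1 : ℕ) = (x_2 : ℕ) then
          if (x_1 : ℕ) < q then -(2 * x (some ⟨2, x_1⟩) * x (some ⟨2, x_2⟩))
          else (-6 + -(q : ℝ)) * x (some ⟨2, x_1⟩) * x (some ⟨2, x_2⟩)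
        else if (x_1 : ℕ) + 1 = (x_2 : ℕ) ∨ (x_2 : ℕ) + 1 = (x_1 : ℕ) then
          x (some ⟨2, x_1⟩) * x (some ⟨2, x_2⟩) else 0)
      = (fun m : ℕ => ∑ m' ∈ Finset.range (q+1), ent W m m' * Y m * Y m') (x_1 : ℕ) := by
    intro j
    calc _ = ∑ x_2 : Fin (q + 1),
          (fun m' : ℕ => ent W (j:ℕ) m' * Y (j:ℕ) * Y m') (x_2 : ℕ) := by
          refine Finset.sum_congr rfl fun j' _ => ?_
          simp only [hYj j, hYj j', ent, hWdef]
          split_ifs <;> ring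
      _ = ∑ m' ∈ Finset.range (q+1), ent W (j:ℕ) m' * Y (j:ℕ) * Y m' := by
          exact Fin.sum_univ_eq_sum_range (fun m' : ℕ => ent W (j:ℕ) m' * Y (j:ℕ) * Y m') (q+1)
  rw [hS1, Finset.sum_congr rfl (fun j _ => congrArg₂ (· + ·) (hS2 j) (hS3 j)),
    Finset.sum_add_distrib, Fin.sum_univ_eq_sum_range (fun m => if m = 0 then Y m * c else 0),
    Fin.sum_univ_eq_sum_range (fun m => ∑ m' ∈ Finset.range (q+1), ent W m m' * Y m * Y m'),
    Finset.sum_ite_eq' (Finset.range (q+1)) 0 (fun m => Y m * c), tridiag W Y q]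
  simp only [Finset.mem_range, Nat.succ_pos, if_pos, Nat.zero_lt_succ]
  -- values of g
  have hg0pos : 0 < g 0 := hgpos 0 (by omega)
  have hgq : g q = (q:ℝ) + 6 := by simp only [hgdef]; ring
  have hgq1 : g (q+1) = 1 := by simp only [hgdef]; push_cast; ring
  -- rewriting the key identity in terms of Y
  have hZsucc : ∀ m : ℕ, Z (m+1) = Y m := fun m => rfl
  have hZ0 : Z 0 = c := rfl
  have hZZ : (∑ j ∈ Finset.range (q+1), Z j * Z (j+1))
      = c * Y 0 + ∑ j ∈ Finset.range q, Y j * Y (j+1) := by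
    rw [Finset.sum_range_succ' (fun j => Z j * Z (j+1)) q]
    simp only [hZsucc, hZ0]
    ring
  have hT4 : (∑ j ∈ Finset.range (q+1), g j / g (j+1) * (Z (j+1) - g (j+1) / g j * Z j)^2)
      = ((q:ℝ)+6) * Y q ^ 2 + (g 1 / g 0) * c^2 + (∑ j ∈ Finset.range q, 2 * Y j ^ 2)
        - 2*(c * Y 0 + ∑ j ∈ Finset.range q, Y j * Y (j+1)) := by
    rw [hkey, hZZ, hgq, hgq1]
    simp only [hZsucc, hZ0]
    ring
  have hW : ∑ j ∈ Finset.range (q+1), W j * Y j ^ 2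
      = -(∑ j ∈ Finset.range q, 2 * Y j ^ 2) - ((q:ℝ)+6) * Y q ^ 2 := by
    rw [Finset.sum_range_succ, ← Finset.sum_neg_distrib]
    have h1 : ∀ j ∈ Finset.range q, W j * Y j ^ 2 = -(2 * Y j ^ 2) := by
      intro j hj
      simp only [Finset.mem_range] at hj
      simp only [hWdef, if_pos hj]
      ring
    rw [Finset.sum_congr rfl h1]
    simp only [hWdef, lt_irrefl, if_neg (lt_irrefl q)]
    ring
  -- the identity: quadratic form = -(sum of squares)
  have hident : -(2 * c * c) + (c * a + c * b + c * Y 0) +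
      (a * c + -(2 * a * a) + (b * c + -(3 * b * b)) +
        (Y 0 * c + (∑ j ∈ Finset.range (q + 1), W j * Y j ^ 2
          + 2 * ∑ j ∈ Finset.range q, Y j * Y (j + 1))))
      = -(2*(a - c/2)^2 + 3*(b - c/3)^2 + (((q:ℝ)+6)^2/(6*g 0))*c^2
          + ∑ j ∈ Finset.range (q+1), g j / g (j+1) * (Z (j+1) - g (j+1) / g j * Z j)^2) := by
    have hg0val : g 0 = ((q:ℝ)+1)*((q:ℝ)+5)+1 := by simp only [hgdef]; push_cast; ring
    have hg1val : g 1 = (q:ℝ)*((q:ℝ)+5)+1 := by simp only [hgdef]; push_cast; ring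
    rw [hW, hT4, hg0val, hg1val]
    have hne : ((q:ℝ)+1)*((q:ℝ)+5)+1 ≠ 0 := by positivity
    field_simp
    ring
  rw [hident]
  -- positivity of the sum of squares
  have hterm : ∀ j ∈ Finset.range (q+1),
      0 ≤ g j / g (j+1) * (Z (j+1) - g (j+1) / g j * Z j)^2 := by
    intro j hj
    simp only [Finset.mem_range] at hj
    exact mul_nonneg (le_of_lt (div_pos (hgpos j (by omega)) (hgpos (j+1) (by omega))))
      (sq_nonneg _)
  have hT4nn : 0 ≤ ∑ j ∈ Finset.range (q+1), g j / g (j+1) * (Z (j+1) - g (j+1) / g j * Z j)^2 :=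
    Finset.sum_nonneg hterm
  have h1nn : (0:ℝ) ≤ 2*(a - c/2)^2 := by positivity
  have h2nn : (0:ℝ) ≤ 3*(b - c/3)^2 := by positivity
  have hcoef : 0 < ((q:ℝ)+6)^2/(6*g 0) := by
    apply div_pos
    · positivity
    · linarith
  have h3nn : (0:ℝ) ≤ (((q:ℝ)+6)^2/(6*g 0))*c^2 := mul_nonneg (le_of_lt hcoef) (sq_nonneg c)
  by_contra hcon
  push_neg at hcon
  -- hcon : 0 ≤ -(...)
  have hsum0 : 2*(a - c/2)^2 + 3*(b - c/3)^2 + (((q:ℝ)+6)^2/(6*g 0))*c^2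
      + (∑ j ∈ Finset.range (q+1), g j / g (j+1) * (Z (j+1) - g (j+1) / g j * Z j)^2) ≤ 0 := by
    linarith
  have e1 : 2*(a - c/2)^2 = 0 := le_antisymm (by linarith) h1nn
  have e2 : 3*(b - c/3)^2 = 0 := le_antisymm (by linarith) h2nn
  have e3 : (((q:ℝ)+6)^2/(6*g 0))*c^2 = 0 := le_antisymm (by linarith) h3nn
  have e4 : (∑ j ∈ Finset.range (q+1), g j / g (j+1) * (Z (j+1) - g (j+1) / g j * Z j)^2) = 0 :=
    le_antisymm (by linarith) hT4nn
  have hc0 : c = 0 := by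
    have : c^2 = 0 := by
      rcases mul_eq_zero.mp e3 with h | h
      · exact absurd h (ne_of_gt hcoef)
      · exact h
    exact sq_eq_zero_iff.mp this
  have ha0 : a = 0 := by
    have : (a - c/2)^2 = 0 := by linarith [sq_nonneg (a - c/2)]
    have := sq_eq_zero_iff.mp this
    rw [hc0] at this
    linarith
  have hb0 : b = 0 := by
    have : (b - c/3)^2 = 0 := by linarith [sq_nonneg (b - c/3)]
    have := sq_eq_zero_iff.mp this
    rw [hc0] at this
    linarith
  have eterm := (Finset.sum_eq_zero_iff_of_nonneg hterm).mp e4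
  have hrec : ∀ j, j < q + 1 → Z (j+1) = g (j+1) / g j * Z j := by
    intro j hj
    have h := eterm j (Finset.mem_range.mpr hj)
    have hne : g j / g (j+1) ≠ 0 :=
      ne_of_gt (div_pos (hgpos j (by omega)) (hgpos (j+1) (by omega)))
    have hsq : (Z (j+1) - g (j+1) / g j * Z j)^2 = 0 := by
      rcases mul_eq_zero.mp h with h' | h'
      · exact absurd h' hne
      · exact h'
    have := sq_eq_zero_iff.mp hsq
    linarith
  have hZzero : ∀ j, j ≤ q + 1 → Z j = 0 := by
    intro j
    induction j with
    | zero => intro _; rw [hZ0, hc0]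
    | succ n ihn =>
      intro hn
      rw [hrec n (by omega), ihn (by omega), mul_zero]
  apply hx
  funext v
  show x v = 0
  rcases v with _ | ⟨i, j⟩
  · rw [← hc]
    exact hc0
  · revert j
    fin_cases i
    · intro j
      have hj0 : (j : ℕ) = 0 := Nat.lt_one_iff.mp j.isLt
      have hj : j = ⟨0, Nat.one_pos⟩ := Fin.ext hj0
      rw [hj]
      exact ha0
    · intro j
      have hj0 : (j : ℕ) = 0 := Nat.lt_one_iff.mp j.isLt
      have hj : j = ⟨0, Nat.one_pos⟩ := Fin.ext hj0
      rw [hj]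
      exact hb0
    · intro j
      have hjlt : (j:ℕ) < q + 1 := j.isLt
      exact (hYj j).trans (hZzero ((j:ℕ)+1) (by omega))
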